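/- Let N > 4 and let R be the field of rational functions over ℝ in the variables α_i, β_i, γ_i, i ∈ ℤ/N. Let {·,·} : R × R → R be ℝ-bilinear, antisymmetric, and a derivation in each argument, whose values on the generators are (indices mod N): {α_i, β_{i−1}} = −½α_iβ_{i−1}, {α_i, β_i} = ½α_iβ_i, {α_i, γ_{i−2}} = −½α_iγ_{i−2}, {α_i, γ_i} = ½α_iγ_i, {β_i, β_{i+1}} = α_{i+1}γ_i, {β_i, γ_{i−1}} = −½β_iγ_{i−1}, {β_i, γ_i} = ½β_iγ_i, and {·,·} vanishes on all other pairs of generators. Define x_i := α_i γ_{i−1} / (β_{i−1} β_i). Then for all i: {x_i, x_{i+1}} = x_i x_{i+1} (x_i + x_{i+1} − 1) and {x_i, x_{i+2}} = x_i x_{i+1} x_{i+2}. -/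

import Mathlib

noncomputable section

/-- The field of rational functions over ℝ in the variables `α_i, β_i, γ_i`, `i ∈ ℤ/N`
(the fraction field of the polynomial ring in these `3N` variables). -/
abbrev RF (N : ℕ) := FractionRing (MvPolynomial (Fin 3 × ZMod N) ℝ)

/-- The generator `α_i`. -/
def va (N : ℕ) (i : ZMod N) : RF N :=
  algebraMap (MvPolynomial (Fin 3 × ZMod N) ℝ) (RF N) (MvPolynomial.X (0, i))

/-- The generator `β_i`. -/
def vb (N : ℕ) (i : ZMod N) : RF N :=
  algebraMap (MvPolynomial (Fin 3 × ZMod N) ℝ) (RF N) (MvPolynomial.X (1, i))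

/-- The generator `γ_i`. -/
def vc (N : ℕ) (i : ZMod N) : RF N :=
  algebraMap (MvPolynomial (Fin 3 × ZMod N) ℝ) (RF N) (MvPolynomial.X (2, i))

/-- The real scalar `c`, as a constant rational function. -/
def cst (N : ℕ) (c : ℝ) : RF N :=
  algebraMap (MvPolynomial (Fin 3 × ZMod N) ℝ) (RF N) (MvPolynomial.C c)

/-- The cross-ratio coordinate `x_i = α_i γ_{i−1} / (β_{i−1} β_i)`. -/
def xq (N : ℕ) (i : ZMod N) : RF N := va N i * vc N (i - 1) / (vb N (i - 1) * vb N i)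

section aux
variable {K : Type*} [Field K] (P : K → K → K)

lemma brk_one2 (hder2 : ∀ x y z : K, P x (y*z) = y * P x z + z * P x y) (x : K) :
    P x 1 = 0 := by
  have h := hder2 x 1 1
  simp only [mul_one, one_mul] at h
  linear_combination -h

lemma brk_inv2 (hder2 : ∀ x y z : K, P x (y*z) = y * P x z + z * P x y)
    (x z : K) (hz : z ≠ 0) : P x z⁻¹ = -(P x z / (z*z)) := by
  have h := hder2 x z z⁻¹
  rw [mul_inv_cancel₀ hz, brk_one2 P hder2] at h
  field_simp at h ⊢
  linear_combination -h

lemma brk_inv1 (hanti : ∀ x y : K, P x y = -P y x)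
    (hder2 : ∀ x y z : K, P x (y*z) = y * P x z + z * P x y)
    (z x : K) (hz : z ≠ 0) : P z⁻¹ x = -(P z x / (z*z)) := by
  rw [hanti, brk_inv2 P hder2 x z hz, hanti x z]
  ring

lemma brk_div (hanti : ∀ x y : K, P x y = -P y x)
    (hder1 : ∀ x y z : K, P (x*y) z = x * P y z + y * P x z)
    (hder2 : ∀ x y z : K, P x (y*z) = y * P x z + z * P x y)
    (a b c d : K) (hb : b ≠ 0) (hd : d ≠ 0) :
    P (a/b) (c/d) = (b*d*P a c - b*c*P a d - a*d*P b c + a*c*P b d) / (b^2*d^2) := by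
  rw [div_eq_mul_inv a, div_eq_mul_inv c, hder1, hder2, hder2,
    brk_inv2 P hder2 a d hd, brk_inv2 P hder2 b⁻¹ d hd,
    brk_inv1 P hanti hder2 b c hb, brk_inv1 P hanti hder2 b d hb]
  field_simp
  ring

lemma brk_self [CharZero K] (hanti : ∀ x y : K, P x y = -P y x) (x : K) : P x x = 0 := by
  have h2 : 2 * P x x = 0 := by linear_combination hanti x x
  have := mul_eq_zero.mp h2
  simpa using this
end aux

lemma vb_ne (N : ℕ) (i : ZMod N) : vb N i ≠ 0 := by
  rw [vb, Ne, IsFractionRing.to_map_eq_zero_iff]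
  exact MvPolynomial.X_ne_zero _

lemma cst_half (N : ℕ) : cst N (1/2) = (1/2 : RF N) := by
  have : cst N (1/2) = ((algebraMap (MvPolynomial (Fin 3 × ZMod N) ℝ) (RF N)).comp
      MvPolynomial.C) (1/2) := rfl
  rw [this, map_div₀, map_one, map_ofNat]


set_option maxHeartbeats 2000000 in
/-- Let `{·,·}` be an ℝ-bilinear antisymmetric biderivation on the
field of rational functions in `α_i, β_i, γ_i` (`i ∈ ℤ/N`, `N > 4`) with the given
values on generators (all other pairs of generators bracketing to zero). Then the
cross-ratios `x_i = α_i γ_{i−1}/(β_{i−1} β_i)` satisfy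
`{x_i, x_{i+1}} = x_i x_{i+1}(x_i + x_{i+1} − 1)` and `{x_i, x_{i+2}} = x_i x_{i+1} x_{i+2}`. -/
theorem stmt10 (N : ℕ) (hN : 4 < N) (Pb : RF N → RF N → RF N)
    -- ℝ-bilinearity (additivity and ℝ-homogeneity in the first slot; by
    -- antisymmetry the same holds in the second slot):
    (hadd : ∀ x y z : RF N, Pb (x + y) z = Pb x z + Pb y z)
    (hsmul : ∀ (c : ℝ) (x y : RF N), Pb (cst N c * x) y = cst N c * Pb x y)
    -- antisymmetry:
    (hanti : ∀ x y : RF N, Pb x y = -Pb y x)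
    -- derivation in each argument:
    (hder1 : ∀ x y z : RF N, Pb (x * y) z = x * Pb y z + y * Pb x z)
    (hder2 : ∀ x y z : RF N, Pb x (y * z) = y * Pb x z + z * Pb x y)
    -- values on the generators:
    (hab1 : ∀ i : ZMod N, Pb (va N i) (vb N (i - 1)) = -(cst N (1/2)) * va N i * vb N (i - 1))
    (hab2 : ∀ i : ZMod N, Pb (va N i) (vb N i) = cst N (1/2) * va N i * vb N i)
    (hac1 : ∀ i : ZMod N, Pb (va N i) (vc N (i - 2)) = -(cst N (1/2)) * va N i * vc N (i - 2))
    (hac2 : ∀ i : ZMod N, Pb (va N i) (vc N i) = cst N (1/2) * va N i * vc N i)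
    (hbb : ∀ i : ZMod N, Pb (vb N i) (vb N (i + 1)) = va N (i + 1) * vc N i)
    (hbc1 : ∀ i : ZMod N, Pb (vb N i) (vc N (i - 1)) = -(cst N (1/2)) * vb N i * vc N (i - 1))
    (hbc2 : ∀ i : ZMod N, Pb (vb N i) (vc N i) = cst N (1/2) * vb N i * vc N i)
    -- vanishing on all other pairs of generators:
    (haa : ∀ i j : ZMod N, Pb (va N i) (va N j) = 0)
    (hcc : ∀ i j : ZMod N, Pb (vc N i) (vc N j) = 0)
    (hab0 : ∀ i j : ZMod N, j ≠ i - 1 → j ≠ i → Pb (va N i) (vb N j) = 0)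
    (hac0 : ∀ i j : ZMod N, j ≠ i - 2 → j ≠ i → Pb (va N i) (vc N j) = 0)
    (hbb0 : ∀ i j : ZMod N, j ≠ i + 1 → i ≠ j + 1 → Pb (vb N i) (vb N j) = 0)
    (hbc0 : ∀ i j : ZMod N, j ≠ i - 1 → j ≠ i → Pb (vb N i) (vc N j) = 0) :
    ∀ i : ZMod N,
      Pb (xq N i) (xq N (i + 1)) = xq N i * xq N (i + 1) * (xq N i + xq N (i + 1) - 1) ∧
      Pb (xq N i) (xq N (i + 2)) = xq N i * xq N (i + 1) * xq N (i + 2) := by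
  have hk : ∀ k : ℕ, 0 < k → k < N → ((k : ZMod N)) ≠ 0 := by
    intro k h1 h2 h
    rw [ZMod.natCast_eq_zero_iff] at h
    exact absurd (Nat.le_of_dvd h1 h) (by omega)
  have h1 : (1 : ZMod N) ≠ 0 := by
    have := hk 1 (by omega) (by omega); push_cast at this; exact this
  have h2 : (2 : ZMod N) ≠ 0 := by
    have := hk 2 (by omega) (by omega); push_cast at this; exact this
  have h3 : (3 : ZMod N) ≠ 0 := by
    have := hk 3 (by omega) (by omega); push_cast at this; exact this
  have h4 : (4 : ZMod N) ≠ 0 := by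
    have := hk 4 (by omega) (by omega); push_cast at this; exact this
  have hc := cst_half N
  have hB := vb_ne N
  intro i
  have e1 : i + 1 - 1 = i := by ring
  have e2 : i + 1 - 2 = i - 1 := by ring
  have e3 : i + 2 - 1 = i + 1 := by ring
  constructor
  · -- values on generators, part 1
    have w1 : Pb (va N i) (va N (i+1)) = 0 := haa _ _
    have w2 : Pb (va N i) (vc N i) = 1/2 * va N i * vc N i := by rw [hac2, hc]
    have w3 : Pb (vc N (i-1)) (va N (i+1)) = 1/2 * (va N (i+1) * vc N (i-1)) := by
      have h := hac1 (i+1); rw [e2] at h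
      rw [hanti, h, hc]; ring
    have w4 : Pb (vc N (i-1)) (vc N i) = 0 := hcc _ _
    have w5 : Pb (va N i) (vb N i) = 1/2 * va N i * vb N i := by rw [hab2, hc]
    have w6 : Pb (va N i) (vb N (i+1)) = 0 :=
      hab0 i (i+1) (fun h => h2 (by linear_combination h)) (fun h => h1 (by linear_combination h))
    have w7 : Pb (vc N (i-1)) (vb N i) = 1/2 * (vb N i * vc N (i-1)) := by
      rw [hanti, hbc1 i, hc]; ring
    have w8 : Pb (vc N (i-1)) (vb N (i+1)) = 0 := by
      rw [hanti, hbc0 (i+1) (i-1) (fun h => h1 (by linear_combination -h))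
        (fun h => h2 (by linear_combination -h)), neg_zero]
    have w9 : Pb (vb N (i-1)) (va N (i+1)) = 0 := by
      rw [hanti, hab0 (i+1) (i-1) (fun h => h1 (by linear_combination -h))
        (fun h => h2 (by linear_combination -h)), neg_zero]
    have w10 : Pb (vb N (i-1)) (vc N i) = 0 :=
      hbc0 (i-1) i (fun h => h2 (by linear_combination h)) (fun h => h1 (by linear_combination h))
    have w11 : Pb (vb N (i-1)) (vb N i) = va N i * vc N (i-1) := by
      have h := hbb (i-1); rw [show i - 1 + 1 = i from by ring] at h; exact h
    have w12 : Pb (vb N (i-1)) (vb N (i+1)) = 0 :=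
      hbb0 (i-1) (i+1) (fun h => h1 (by linear_combination h)) (fun h => h3 (by linear_combination -h))
    have w13 : Pb (vb N i) (va N (i+1)) = 1/2 * (va N (i+1) * vb N i) := by
      have h := hab1 (i+1); rw [e1] at h
      rw [hanti, h, hc]; ring
    have w14 : Pb (vb N i) (vc N i) = 1/2 * vb N i * vc N i := by rw [hbc2, hc]
    have w15 : Pb (vb N i) (vb N i) = 0 := brk_self Pb hanti _
    have w16 : Pb (vb N i) (vb N (i+1)) = va N (i+1) * vc N i := hbb i
    simp only [xq, e1]
    rw [brk_div Pb hanti hder1 hder2 _ _ _ _ (mul_ne_zero (hB _) (hB _)) (mul_ne_zero (hB _) (hB _))]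
    simp only [hder1, hder2]
    rw [w1, w2, w3, w4, w5, w6, w7, w8, w9, w10, w11, w12, w13, w14, w15, w16]
    field_simp [hB]
    ring
  · have u1 : Pb (va N i) (va N (i+2)) = 0 := haa _ _
    have u2 : Pb (va N i) (vc N (i+1)) = 0 :=
      hac0 i (i+1) (fun h => h3 (by linear_combination h)) (fun h => h1 (by linear_combination h))
    have u3 : Pb (va N i) (vb N (i+1)) = 0 :=
      hab0 i (i+1) (fun h => h2 (by linear_combination h)) (fun h => h1 (by linear_combination h))
    have u4 : Pb (va N i) (vb N (i+2)) = 0 :=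
      hab0 i (i+2) (fun h => h3 (by linear_combination h)) (fun h => h2 (by linear_combination h))
    have u5 : Pb (vc N (i-1)) (va N (i+2)) = 0 := by
      rw [hanti, hac0 (i+2) (i-1) (fun h => h1 (by linear_combination -h))
        (fun h => h3 (by linear_combination -h)), neg_zero]
    have u6 : Pb (vc N (i-1)) (vc N (i+1)) = 0 := hcc _ _
    have u7 : Pb (vc N (i-1)) (vb N (i+1)) = 0 := by
      rw [hanti, hbc0 (i+1) (i-1) (fun h => h1 (by linear_combination -h))
        (fun h => h2 (by linear_combination -h)), neg_zero]
    have u8 : Pb (vc N (i-1)) (vb N (i+2)) = 0 := by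
      rw [hanti, hbc0 (i+2) (i-1) (fun h => h2 (by linear_combination -h))
        (fun h => h3 (by linear_combination -h)), neg_zero]
    have u9 : Pb (vb N (i-1)) (va N (i+2)) = 0 := by
      rw [hanti, hab0 (i+2) (i-1) (fun h => h2 (by linear_combination -h))
        (fun h => h3 (by linear_combination -h)), neg_zero]
    have u10 : Pb (vb N (i-1)) (vc N (i+1)) = 0 :=
      hbc0 (i-1) (i+1) (fun h => h3 (by linear_combination h)) (fun h => h2 (by linear_combination h))
    have u11 : Pb (vb N (i-1)) (vb N (i+1)) = 0 :=
      hbb0 (i-1) (i+1) (fun h => h1 (by linear_combination h)) (fun h => h3 (by linear_combination -h))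
    have u12 : Pb (vb N (i-1)) (vb N (i+2)) = 0 :=
      hbb0 (i-1) (i+2) (fun h => h2 (by linear_combination h)) (fun h => h4 (by linear_combination -h))
    have u13 : Pb (vb N i) (va N (i+2)) = 0 := by
      rw [hanti, hab0 (i+2) i (fun h => h1 (by linear_combination -h))
        (fun h => h2 (by linear_combination -h)), neg_zero]
    have u14 : Pb (vb N i) (vc N (i+1)) = 0 :=
      hbc0 i (i+1) (fun h => h2 (by linear_combination h)) (fun h => h1 (by linear_combination h))
    have u15 : Pb (vb N i) (vb N (i+1)) = va N (i+1) * vc N i := hbb i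
    have u16 : Pb (vb N i) (vb N (i+2)) = 0 :=
      hbb0 i (i+2) (fun h => h1 (by linear_combination h)) (fun h => h3 (by linear_combination -h))
    simp only [xq, e1, e3]
    rw [brk_div Pb hanti hder1 hder2 _ _ _ _ (mul_ne_zero (hB _) (hB _)) (mul_ne_zero (hB _) (hB _))]
    simp only [hder1, hder2]
    rw [u1, u2, u3, u4, u5, u6, u7, u8, u9, u10, u11, u12, u13, u14, u15, u16]
    field_simp [hB]
    ring
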